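/- Let α be a PBR on (X,Y) and β a PBR on (Y,Z). Then, with ∘ denoting usual composition of binary relations (η∘θ = {(x,z) : ∃y, (x,y) ∈ θ and (y,z) ∈ η}) and ρ^i the i-fold relational power of a binary relation ρ on Y (ρ^0 being the equality relation on Y), the components of the PBR composition β∘α are given by: (β∘α)₁₂ = ⋃_{i≥0} β₁₂∘(α₂₂∘β₁₁)^i∘α₁₂; (β∘α)₂₁ = ⋃_{i≥0} α₂₁∘(β₁₁∘α₂₂)^i∘β₂₁; (β∘α)₁₁ = α₁₁ ∪ ⋃_{i≥0} α₂₁∘(β₁₁∘α₂₂)^i∘β₁₁∘α₁₂; (β∘α)₂₂ = β₂₂ ∪ ⋃_{i≥0} β₁₂∘(α₂₂∘β₁₁)^i∘α₂₂∘β₂₁. -/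

import Mathlib

namespace PBRPaper

/-- A partitioned binary relation (PBR) on `(X, Y)`: a binary relation on
the disjoint union `X ⊕ Y`. -/
abbrev PBR (X Y : Type) : Type := Set ((X ⊕ Y) × (X ⊕ Y))

variable {X Y Z : Type}

/-- The inclusion of `X ⊕ Y` into `X ⊕ Y ⊕ Z`. -/
def ι₁ : X ⊕ Y → X ⊕ Y ⊕ Z := Sum.elim Sum.inl fun y => Sum.inr (Sum.inl y)

/-- The inclusion of `Y ⊕ Z` into `X ⊕ Y ⊕ Z`. -/
def ι₂ : Y ⊕ Z → X ⊕ Y ⊕ Z :=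
  Sum.elim (fun y => Sum.inr (Sum.inl y)) fun z => Sum.inr (Sum.inr z)

/-- The inclusion of `X ⊕ Z` into `X ⊕ Y ⊕ Z`. -/
def ι₀ : X ⊕ Z → X ⊕ Y ⊕ Z := Sum.elim Sum.inl fun z => Sum.inr (Sum.inr z)

/-- Labeled edges in the ambient `X ⊕ Y ⊕ Z`: label `false` means
"an edge of `α`", label `true` means "an edge of `β`". -/
def EdgeMem (α : PBR X Y) (β : PBR Y Z)
    (e : Bool × (X ⊕ Y ⊕ Z) × (X ⊕ Y ⊕ Z)) : Prop :=
  if e.1 then ∃ p ∈ β, ι₂ p.1 = e.2.1 ∧ ι₂ p.2 = e.2.2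
  else ∃ p ∈ α, ι₁ p.1 = e.2.1 ∧ ι₁ p.2 = e.2.2

/-- An `(α,β)`-connected sequence: a nonempty list of labeled edges of `α`/`β`,
no two successive edges from the same PBR, endpoints matching up. -/
def IsConnSeq (α : PBR X Y) (β : PBR Y Z)
    (L : List (Bool × (X ⊕ Y ⊕ Z) × (X ⊕ Y ⊕ Z))) : Prop :=
  L ≠ [] ∧ (∀ e ∈ L, EdgeMem α β e) ∧
    L.Chain' fun e f => e.1 ≠ f.1 ∧ e.2.2 = f.2.1

/-- `L` is an `(α,β)`-connected sequence connecting `a` to `b`. -/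
def ConnectsVia (α : PBR X Y) (β : PBR Y Z)
    (L : List (Bool × (X ⊕ Y ⊕ Z) × (X ⊕ Y ⊕ Z))) (a b : X ⊕ Z) : Prop :=
  IsConnSeq α β L ∧ L.head?.map (fun e => e.2.1) = some (ι₀ a) ∧
    L.getLast?.map (fun e => e.2.2) = some (ι₀ b)

/-- Composition of partitioned binary relations. -/
def comp (β : PBR Y Z) (α : PBR X Y) : PBR X Z :=
  {p | ∃ L, ConnectsVia α β L p.1 p.2}

/-- The identity PBR `ε_X`, consisting of all edges `(x^(d), x^(c))`
and `(x^(c), x^(d))`. -/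
def eps (X : Type) : PBR X X :=
  {p | ∃ x : X, p = (Sum.inl x, Sum.inr x) ∨ p = (Sum.inr x, Sum.inl x)}

/-- A labeled edge is `(α,β)`-frothy if it is an edge of the corresponding PBR
occurring in no `(α,β)`-connected sequence connecting two elements of `X ⊕ Z`. -/
def IsFrothy (α : PBR X Y) (β : PBR Y Z)
    (e : Bool × (X ⊕ Y ⊕ Z) × (X ⊕ Y ⊕ Z)) : Prop :=
  EdgeMem α β e ∧ ∀ L a b, ConnectsVia α β L a b → e ∉ L

/-- An `(α,β)`-frothy cycle. -/
def IsFrothyCycle (α : PBR X Y) (β : PBR Y Z)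
    (L : List (Bool × (X ⊕ Y ⊕ Z) × (X ⊕ Y ⊕ Z))) : Prop :=
  IsConnSeq α β L ∧ 2 ≤ L.length ∧
    L.getLast?.map (fun e => e.2.2) = L.head?.map (fun e => e.2.1) ∧
    L.head?.map (fun e => e.1) ≠ L.getLast?.map (fun e => e.1) ∧
    ∀ e ∈ L, IsFrothy α β e

/-- The type of `(α,β)`-frothy cycles. -/
def FrothyCycles (α : PBR X Y) (β : PBR Y Z) :=
  {L : List (Bool × (X ⊕ Y ⊕ Z) × (X ⊕ Y ⊕ Z)) // IsFrothyCycle α β L}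

/-- `𝔣((α,β))`: the number of equivalence classes of `(α,β)`-frothy cycles,
where the equivalence is generated by elementary equivalence (sharing a common
edge of the same PBR); note that naive equivalence (cyclic permutation) is
subsumed, since a cycle and any of its cyclic permutations share all edges. -/
noncomputable def fPBR (α : PBR X Y) (β : PBR Y Z) : ℕ :=
  Nat.card (Quot fun L L' : FrothyCycles α β => ∃ e, e ∈ L.1 ∧ e ∈ L'.1)

variable {X Y : Type} in
/-- The component `α₁₁ ⊆ X × X` of a PBR `α` on `(X,Y)`. -/
def c11 (α : PBR X Y) : Set (X × X) :=
  {q | (Sum.inl q.1, Sum.inl q.2) ∈ α}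

variable {X Y : Type} in
/-- The component `α₁₂ ⊆ X × Y` of a PBR `α` on `(X,Y)`. -/
def c12 (α : PBR X Y) : Set (X × Y) :=
  {q | (Sum.inl q.1, Sum.inr q.2) ∈ α}

variable {X Y : Type} in
/-- The component `α₂₁ ⊆ Y × X` of a PBR `α` on `(X,Y)`. -/
def c21 (α : PBR X Y) : Set (Y × X) :=
  {q | (Sum.inr q.1, Sum.inl q.2) ∈ α}

variable {X Y : Type} in
/-- The component `α₂₂ ⊆ Y × Y` of a PBR `α` on `(X,Y)`. -/
def c22 (α : PBR X Y) : Set (Y × Y) :=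
  {q | (Sum.inr q.1, Sum.inr q.2) ∈ α}

/-- Usual composition of binary relations: `η∘θ = {(x,z) : ∃ y, (x,y) ∈ θ ∧ (y,z) ∈ η}`. -/
def relComp {X Y Z : Type} (η : Set (Y × Z)) (θ : Set (X × Y)) : Set (X × Z) :=
  {p | ∃ y, (p.1, y) ∈ θ ∧ (y, p.2) ∈ η}

variable {Y : Type} in
/-- The `i`-fold relational power of a binary relation on `Y`;
`ρ^0` is the equality relation. -/
def relPow (ρ : Set (Y × Y)) : ℕ → Set (Y × Y)
  | 0 => {p | p.1 = p.2}
  | n + 1 => relComp ρ (relPow ρ n)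

section Aux

variable {X Y Z : Type}

lemma relPow_zero_iff {ρ : Set (Y × Y)} {a b : Y} : (a, b) ∈ relPow ρ 0 ↔ a = b := Iff.rfl

lemma relPow_succ' (ρ : Set (Y × Y)) (n : ℕ) :
    relPow ρ (n + 1) = relComp (relPow ρ n) ρ := by
  induction n with
  | zero =>
    ext ⟨a, b⟩
    simp only [relPow, relComp, Set.mem_setOf_eq]
    aesop
  | succ n ih =>
    show relComp ρ (relPow ρ (n+1)) = _
    ext ⟨a, b⟩
    constructor
    · rintro ⟨w, haw, hwb⟩
      rw [ih] at haw
      obtain ⟨y, hay, hyw⟩ := haw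
      exact ⟨y, hay, ⟨w, hyw, hwb⟩⟩
    · rintro ⟨y, hay, w, hyw, hwb⟩
      have haw : (a, w) ∈ relPow ρ (n + 1) := by
        rw [ih]; exact ⟨y, hay, hyw⟩
      exact ⟨w, haw, hwb⟩

lemma mem_relPow_succ' {ρ : Set (Y × Y)} {n : ℕ} {a b c : Y}
    (h1 : (a, b) ∈ ρ) (h2 : (b, c) ∈ relPow ρ n) : (a, c) ∈ relPow ρ (n + 1) := by
  rw [relPow_succ']
  exact ⟨b, h1, h2⟩

/-- shape lemmas for edges -/
lemma edge_false_cases {α : PBR X Y} {β : PBR Y Z} {s t : X ⊕ Y ⊕ Z}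
    (h : EdgeMem α β (false, s, t)) :
    (∃ x x', s = Sum.inl x ∧ t = Sum.inl x' ∧ (x, x') ∈ c11 α) ∨
    (∃ x y, s = Sum.inl x ∧ t = Sum.inr (Sum.inl y) ∧ (x, y) ∈ c12 α) ∨
    (∃ y x, s = Sum.inr (Sum.inl y) ∧ t = Sum.inl x ∧ (y, x) ∈ c21 α) ∨
    (∃ y y', s = Sum.inr (Sum.inl y) ∧ t = Sum.inr (Sum.inl y') ∧ (y, y') ∈ c22 α) := by
  simp only [EdgeMem, Bool.false_eq_true, if_false] at h
  obtain ⟨⟨p1, p2⟩, hp, h1, h2⟩ := h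
  cases p1 with
  | inl x => cases p2 with
    | inl x' => exact Or.inl ⟨x, x', h1.symm, h2.symm, hp⟩
    | inr y => exact Or.inr (Or.inl ⟨x, y, h1.symm, h2.symm, hp⟩)
  | inr y => cases p2 with
    | inl x => exact Or.inr (Or.inr (Or.inl ⟨y, x, h1.symm, h2.symm, hp⟩))
    | inr y' => exact Or.inr (Or.inr (Or.inr ⟨y, y', h1.symm, h2.symm, hp⟩))

lemma edge_true_cases {α : PBR X Y} {β : PBR Y Z} {s t : X ⊕ Y ⊕ Z}
    (h : EdgeMem α β (true, s, t)) :
    (∃ y y', s = Sum.inr (Sum.inl y) ∧ t = Sum.inr (Sum.inl y') ∧ (y, y') ∈ c11 β) ∨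
    (∃ y z, s = Sum.inr (Sum.inl y) ∧ t = Sum.inr (Sum.inr z) ∧ (y, z) ∈ c12 β) ∨
    (∃ z y, s = Sum.inr (Sum.inr z) ∧ t = Sum.inr (Sum.inl y) ∧ (z, y) ∈ c21 β) ∨
    (∃ z z', s = Sum.inr (Sum.inr z) ∧ t = Sum.inr (Sum.inr z') ∧ (z, z') ∈ c22 β) := by
  simp only [EdgeMem, if_true] at h
  obtain ⟨⟨p1, p2⟩, hp, h1, h2⟩ := h
  cases p1 with
  | inl y => cases p2 with
    | inl y' => exact Or.inl ⟨y, y', h1.symm, h2.symm, hp⟩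
    | inr z => exact Or.inr (Or.inl ⟨y, z, h1.symm, h2.symm, hp⟩)
  | inr z => cases p2 with
    | inl y => exact Or.inr (Or.inr (Or.inl ⟨z, y, h1.symm, h2.symm, hp⟩))
    | inr z' => exact Or.inr (Or.inr (Or.inr ⟨z, z', h1.symm, h2.symm, hp⟩))

/- constructors for edges -/
lemma emA11 {α : PBR X Y} {β : PBR Y Z} {x x' : X} (h : (x, x') ∈ c11 α) :
    EdgeMem α β (false, Sum.inl x, Sum.inl x') := by
  simp only [EdgeMem, Bool.false_eq_true, if_false]
  exact ⟨(Sum.inl x, Sum.inl x'), h, rfl, rfl⟩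

lemma emA12 {α : PBR X Y} {β : PBR Y Z} {x : X} {y : Y} (h : (x, y) ∈ c12 α) :
    EdgeMem α β (false, Sum.inl x, Sum.inr (Sum.inl y)) := by
  simp only [EdgeMem, Bool.false_eq_true, if_false]
  exact ⟨(Sum.inl x, Sum.inr y), h, rfl, rfl⟩

lemma emA21 {α : PBR X Y} {β : PBR Y Z} {y : Y} {x : X} (h : (y, x) ∈ c21 α) :
    EdgeMem α β (false, Sum.inr (Sum.inl y), Sum.inl x) := by
  simp only [EdgeMem, Bool.false_eq_true, if_false]
  exact ⟨(Sum.inr y, Sum.inl x), h, rfl, rfl⟩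

lemma emA22 {α : PBR X Y} {β : PBR Y Z} {y y' : Y} (h : (y, y') ∈ c22 α) :
    EdgeMem α β (false, Sum.inr (Sum.inl y), Sum.inr (Sum.inl y')) := by
  simp only [EdgeMem, Bool.false_eq_true, if_false]
  exact ⟨(Sum.inr y, Sum.inr y'), h, rfl, rfl⟩

lemma emB11 {α : PBR X Y} {β : PBR Y Z} {y y' : Y} (h : (y, y') ∈ c11 β) :
    EdgeMem α β (true, Sum.inr (Sum.inl y), Sum.inr (Sum.inl y')) := by
  simp only [EdgeMem, if_true]
  exact ⟨(Sum.inl y, Sum.inl y'), h, rfl, rfl⟩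

lemma emB12 {α : PBR X Y} {β : PBR Y Z} {y : Y} {z : Z} (h : (y, z) ∈ c12 β) :
    EdgeMem α β (true, Sum.inr (Sum.inl y), Sum.inr (Sum.inr z)) := by
  simp only [EdgeMem, if_true]
  exact ⟨(Sum.inl y, Sum.inr z), h, rfl, rfl⟩

lemma emB21 {α : PBR X Y} {β : PBR Y Z} {z : Z} {y : Y} (h : (z, y) ∈ c21 β) :
    EdgeMem α β (true, Sum.inr (Sum.inr z), Sum.inr (Sum.inl y)) := by
  simp only [EdgeMem, if_true]
  exact ⟨(Sum.inr z, Sum.inl y), h, rfl, rfl⟩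

lemma emB22 {α : PBR X Y} {β : PBR Y Z} {z z' : Z} (h : (z, z') ∈ c22 β) :
    EdgeMem α β (true, Sum.inr (Sum.inr z), Sum.inr (Sum.inr z')) := by
  simp only [EdgeMem, if_true]
  exact ⟨(Sum.inr z, Sum.inr z'), h, rfl, rfl⟩

end Aux

section Master

variable {X Y Z : Type}

/-- Target relation for the backward direction, indexed by the label of the
first edge, its source point, and the final endpoint. -/
def Goal (α : PBR X Y) (β : PBR Y Z) : Bool → (X ⊕ Y ⊕ Z) → (X ⊕ Z) → Prop
  | false, Sum.inl x, Sum.inl x' =>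
      (x, x') ∈ c11 α ∪
        ⋃ i : ℕ, relComp (c21 α)
          (relComp (relPow (relComp (c11 β) (c22 α)) i) (relComp (c11 β) (c12 α)))
  | false, Sum.inl x, Sum.inr z =>
      (x, z) ∈ ⋃ i : ℕ, relComp (c12 β)
        (relComp (relPow (relComp (c22 α) (c11 β)) i) (c12 α))
  | false, Sum.inr (Sum.inl y), Sum.inl x =>
      (y, x) ∈ ⋃ i : ℕ, relComp (c21 α) (relPow (relComp (c11 β) (c22 α)) i)
  | false, Sum.inr (Sum.inl y), Sum.inr z =>
      (y, z) ∈ ⋃ i : ℕ, relComp (c12 β)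
        (relComp (relPow (relComp (c22 α) (c11 β)) i) (c22 α))
  | true, Sum.inr (Sum.inl y), Sum.inl x =>
      (y, x) ∈ ⋃ i : ℕ, relComp (c21 α)
        (relComp (relPow (relComp (c11 β) (c22 α)) i) (c11 β))
  | true, Sum.inr (Sum.inl y), Sum.inr z =>
      (y, z) ∈ ⋃ i : ℕ, relComp (c12 β) (relPow (relComp (c22 α) (c11 β)) i)
  | true, Sum.inr (Sum.inr z), Sum.inl x =>
      (z, x) ∈ ⋃ i : ℕ, relComp (c21 α)
        (relComp (relPow (relComp (c11 β) (c22 α)) i) (c21 β))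
  | true, Sum.inr (Sum.inr z), Sum.inr z' =>
      (z, z') ∈ c22 β ∪
        ⋃ i : ℕ, relComp (c12 β)
          (relComp (relPow (relComp (c22 α) (c11 β)) i) (relComp (c22 α) (c21 β)))
  | false, Sum.inr (Sum.inr _), _ => False
  | true, Sum.inl _, _ => False

lemma master (α : PBR X Y) (β : PBR Y Z) :
    ∀ (L : List (Bool × (X ⊕ Y ⊕ Z) × (X ⊕ Y ⊕ Z)))
      (e : Bool × (X ⊕ Y ⊕ Z) × (X ⊕ Y ⊕ Z)),
      (∀ f ∈ e :: L, EdgeMem α β f) →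
      (e :: L).Chain' (fun e f => e.1 ≠ f.1 ∧ e.2.2 = f.2.1) →
      ∀ v : X ⊕ Z, ((e :: L).getLast?).map (fun f => f.2.2) = some (ι₀ v) →
      Goal α β e.1 e.2.1 v := by
  intro L
  induction L with
  | nil =>
    intro e h _ v hv
    obtain ⟨b, s, t⟩ := e
    simp only [List.getLast?_singleton, Option.map_some] at hv
    cases b with
    | false =>
      rcases edge_false_cases (h _ (List.mem_singleton_self _)) with
        ⟨x, x', rfl, rfl, hm⟩ | ⟨x, y, rfl, rfl, hm⟩ | ⟨y, x, rfl, rfl, hm⟩ | ⟨y, y', rfl, rfl, hm⟩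
      · cases v with
        | inl x'' =>
          have : x' = x'' := by simpa [ι₀] using hv
          subst this
          exact Or.inl hm
        | inr z => simp [ι₀] at hv
      · cases v <;> simp [ι₀] at hv
      · cases v with
        | inl x'' =>
          have : x = x'' := by simpa [ι₀] using hv
          subst this
          show (y, x) ∈ ⋃ i : ℕ, _
          exact Set.mem_iUnion.2 ⟨0, y, rfl, hm⟩
        | inr z => simp [ι₀] at hv
      · cases v <;> simp [ι₀] at hv
    | true =>
      rcases edge_true_cases (h _ (List.mem_singleton_self _)) with
        ⟨y, y', rfl, rfl, hm⟩ | ⟨y, z, rfl, rfl, hm⟩ | ⟨z, y, rfl, rfl, hm⟩ | ⟨z, z', rfl, rfl, hm⟩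
      · cases v <;> simp [ι₀] at hv
      · cases v with
        | inl x => simp [ι₀] at hv
        | inr z' =>
          have : z = z' := by simpa [ι₀] using hv
          subst this
          show (y, z) ∈ ⋃ i : ℕ, _
          exact Set.mem_iUnion.2 ⟨0, y, rfl, hm⟩
      · cases v <;> simp [ι₀] at hv
      · cases v with
        | inl x => simp [ι₀] at hv
        | inr z'' =>
          have : z' = z'' := by simpa [ι₀] using hv
          subst this
          exact Or.inl hm
  | cons e' L' ih =>
    intro e h hc v hv
    obtain ⟨b, s, t⟩ := e
    have hch : (e' :: L').Chain' (fun e f => e.1 ≠ f.1 ∧ e.2.2 = f.2.1) :=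
      (List.isChain_cons.1 hc).2
    have hR : b ≠ e'.1 ∧ t = e'.2.1 := by
      rcases List.isChain_cons_cons.1 hc with ⟨h1, _⟩
      exact h1
    have hIH := ih e' (fun f hf => h f (List.mem_cons_of_mem _ hf)) hch v
      (by simpa using hv)
    cases b with
    | false =>
      have hb' : e'.1 = true := by
        cases hb : e'.1
        · exact absurd hb.symm hR.1
        · rfl
      rcases edge_false_cases (h _ List.mem_cons_self) with
        ⟨x, x', rfl, ht, hm⟩ | ⟨x, y, rfl, ht, hm⟩ | ⟨y, x, rfl, ht, hm⟩ | ⟨y, y', rfl, ht, hm⟩ <;>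
        rw [← hR.2, ht] at hIH <;> rw [hb'] at hIH
      · exact absurd hIH (by simp [Goal])
      · -- e : A12 edge x → y, rest starts at y with label true
        cases v with
        | inl x'' =>
          obtain ⟨i, w, ⟨y1, hB11, hQi⟩, hA21⟩ := Set.mem_iUnion.1 hIH
          refine Or.inr (Set.mem_iUnion.2 ⟨i, w, ⟨y1, ⟨y, hm, hB11⟩, hQi⟩, hA21⟩)
        | inr z =>
          obtain ⟨i, w, hPi, hB12⟩ := Set.mem_iUnion.1 hIH
          exact Set.mem_iUnion.2 ⟨i, w, ⟨y, hm, hPi⟩, hB12⟩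
      · exact absurd hIH (by simp [Goal])
      · -- e : A22 edge y → y', rest starts at y' with label true
        cases v with
        | inl x =>
          obtain ⟨i, w, ⟨y1, hB11, hQi⟩, hA21⟩ := Set.mem_iUnion.1 hIH
          refine Set.mem_iUnion.2 ⟨i + 1, w, ?_, hA21⟩
          exact mem_relPow_succ' ⟨y', hm, hB11⟩ hQi
        | inr z =>
          obtain ⟨i, w, hPi, hB12⟩ := Set.mem_iUnion.1 hIH
          exact Set.mem_iUnion.2 ⟨i, w, ⟨y', hm, hPi⟩, hB12⟩
    | true =>
      have hb' : e'.1 = false := by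
        cases hb : e'.1
        · rfl
        · exact absurd hb.symm hR.1
      rcases edge_true_cases (h _ List.mem_cons_self) with
        ⟨y, y', rfl, ht, hm⟩ | ⟨y, z, rfl, ht, hm⟩ | ⟨z, y, rfl, ht, hm⟩ | ⟨z, z', rfl, ht, hm⟩ <;>
        rw [← hR.2, ht] at hIH <;> rw [hb'] at hIH
      · -- e : B11 edge y → y', rest starts at y' with label false
        cases v with
        | inl x =>
          obtain ⟨i, w, hQi, hA21⟩ := Set.mem_iUnion.1 hIH
          exact Set.mem_iUnion.2 ⟨i, w, ⟨y', hm, hQi⟩, hA21⟩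
        | inr z =>
          obtain ⟨i, w, ⟨y1, hA22, hPi⟩, hB12⟩ := Set.mem_iUnion.1 hIH
          refine Set.mem_iUnion.2 ⟨i + 1, w, ?_, hB12⟩
          exact mem_relPow_succ' ⟨y', hm, hA22⟩ hPi
      · exact absurd hIH (by simp [Goal])
      · -- e : B21 edge z → y, rest starts at y with label false
        cases v with
        | inl x =>
          obtain ⟨i, w, hQi, hA21⟩ := Set.mem_iUnion.1 hIH
          exact Set.mem_iUnion.2 ⟨i, w, ⟨y, hm, hQi⟩, hA21⟩
        | inr z' =>
          obtain ⟨i, w, ⟨y1, hA22, hPi⟩, hB12⟩ := Set.mem_iUnion.1 hIH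
          refine Or.inr (Set.mem_iUnion.2 ⟨i, w, ⟨y1, ⟨y, hm, hA22⟩, hPi⟩, hB12⟩)
      · exact absurd hIH (by simp [Goal])
  end Master

section Builders

variable {X Y Z : Type}

/-- Invariant for incrementally built connected sequences: first edge has
source `u`, last edge has label `b` and target `w`. -/
def Builds (α : PBR X Y) (β : PBR Y Z)
    (L : List (Bool × (X ⊕ Y ⊕ Z) × (X ⊕ Y ⊕ Z)))
    (u w : X ⊕ Y ⊕ Z) (b : Bool) : Prop :=
  (∀ e ∈ L, EdgeMem α β e) ∧
    (L.Chain' fun e f => e.1 ≠ f.1 ∧ e.2.2 = f.2.1) ∧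
    (∃ f, L.head? = some f ∧ f.2.1 = u) ∧
    (∃ g, L.getLast? = some g ∧ g.1 = b ∧ g.2.2 = w)

lemma Builds.single {α : PBR X Y} {β : PBR Y Z} {b : Bool} {u w : X ⊕ Y ⊕ Z}
    (h : EdgeMem α β (b, u, w)) : Builds α β [(b, u, w)] u w b := by
  refine ⟨?_, ?_, ⟨(b, u, w), rfl, rfl⟩, ⟨(b, u, w), rfl, rfl, rfl⟩⟩
  · intro e he; rw [List.mem_singleton] at he; subst he; exact h
  · exact List.isChain_singleton _

lemma Builds.snoc {α : PBR X Y} {β : PBR Y Z} {b : Bool} {u w w' : X ⊕ Y ⊕ Z}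
    {L : List (Bool × (X ⊕ Y ⊕ Z) × (X ⊕ Y ⊕ Z))}
    (hL : Builds α β L u w b) (h : EdgeMem α β (!b, w, w')) :
    Builds α β (L ++ [(!b, w, w')]) u w' (!b) := by
  obtain ⟨hmem, hch, ⟨f, hf, hf1⟩, ⟨g, hg, hg1, hg2⟩⟩ := hL
  refine ⟨?_, ?_, ?_, ?_⟩
  · intro e he
    rcases List.mem_append.1 he with he | he
    · exact hmem e he
    · rw [List.mem_singleton] at he; subst he; exact h
  · rw [List.Chain', List.isChain_append]
    refine ⟨hch, by simp, ?_⟩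
    intro x hx y hy
    simp only [List.head?_cons, Option.mem_def, Option.some.injEq] at hy
    rw [Option.mem_def, hg, Option.some.injEq] at hx
    subst hx; subst hy
    refine ⟨?_, hg2⟩
    rw [hg1]; cases b <;> simp
  · refine ⟨f, ?_, hf1⟩
    have : L ≠ [] := by intro hnil; rw [hnil] at hf; simp at hf
    cases L with
    | nil => exact absurd rfl this
    | cons a L'' => simpa using hf
  · exact ⟨(!b, w, w'), by simp, rfl, rfl⟩

lemma buildP {α : PBR X Y} {β : PBR Y Z} :
    ∀ (i : ℕ) (x : X) (y₂ : Y),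
      (x, y₂) ∈ relComp (relPow (relComp (c22 α) (c11 β)) i) (c12 α) →
      ∃ L, Builds α β L (Sum.inl x) (Sum.inr (Sum.inl y₂)) false := by
  intro i
  induction i with
  | zero =>
    rintro x y₂ ⟨w, hw, hwy⟩
    have : w = y₂ := hwy
    subst this
    exact ⟨_, Builds.single (emA12 hw)⟩
  | succ i ih =>
    rintro x y₂ ⟨y₀, hA12, hPow⟩
    obtain ⟨y₁, hPi, y', hB11, hA22⟩ := hPow
    obtain ⟨L, hL⟩ := ih x y₁ ⟨y₀, hA12, hPi⟩
    exact ⟨_, (hL.snoc (emB11 hB11)).snoc (emA22 hA22)⟩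

lemma buildQx {α : PBR X Y} {β : PBR Y Z} :
    ∀ (i : ℕ) (x : X) (y₂ : Y),
      (x, y₂) ∈ relComp (relPow (relComp (c11 β) (c22 α)) i) (relComp (c11 β) (c12 α)) →
      ∃ L, Builds α β L (Sum.inl x) (Sum.inr (Sum.inl y₂)) true := by
  intro i
  induction i with
  | zero =>
    rintro x y₂ ⟨w, ⟨y, hA12, hB11⟩, hwy⟩
    have : w = y₂ := hwy
    subst this
    exact ⟨_, (Builds.single (emA12 hA12)).snoc (emB11 hB11)⟩
  | succ i ih =>
    rintro x y₂ ⟨y₀, h0, hPow⟩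
    obtain ⟨y₁, hQi, y', hA22, hB11⟩ := hPow
    obtain ⟨L, hL⟩ := ih x y₁ ⟨y₀, h0, hQi⟩
    exact ⟨_, (hL.snoc (emA22 hA22)).snoc (emB11 hB11)⟩

lemma buildQz {α : PBR X Y} {β : PBR Y Z} :
    ∀ (i : ℕ) (z : Z) (y₂ : Y),
      (z, y₂) ∈ relComp (relPow (relComp (c11 β) (c22 α)) i) (c21 β) →
      ∃ L, Builds α β L (Sum.inr (Sum.inr z)) (Sum.inr (Sum.inl y₂)) true := by
  intro i
  induction i with
  | zero =>
    rintro z y₂ ⟨w, hw, hwy⟩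
    have : w = y₂ := hwy
    subst this
    exact ⟨_, Builds.single (emB21 hw)⟩
  | succ i ih =>
    rintro z y₂ ⟨y₀, h0, hPow⟩
    obtain ⟨y₁, hQi, y', hA22, hB11⟩ := hPow
    obtain ⟨L, hL⟩ := ih z y₁ ⟨y₀, h0, hQi⟩
    exact ⟨_, (hL.snoc (emA22 hA22)).snoc (emB11 hB11)⟩

lemma buildPz {α : PBR X Y} {β : PBR Y Z} :
    ∀ (i : ℕ) (z : Z) (y₂ : Y),
      (z, y₂) ∈ relComp (relPow (relComp (c22 α) (c11 β)) i) (relComp (c22 α) (c21 β)) →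
      ∃ L, Builds α β L (Sum.inr (Sum.inr z)) (Sum.inr (Sum.inl y₂)) false := by
  intro i
  induction i with
  | zero =>
    rintro z y₂ ⟨w, ⟨y, hB21, hA22⟩, hwy⟩
    have : w = y₂ := hwy
    subst this
    exact ⟨_, (Builds.single (emB21 hB21)).snoc (emA22 hA22)⟩
  | succ i ih =>
    rintro z y₂ ⟨y₀, h0, hPow⟩
    obtain ⟨y₁, hPi, y', hB11, hA22⟩ := hPow
    obtain ⟨L, hL⟩ := ih z y₁ ⟨y₀, h0, hPi⟩
    exact ⟨_, (hL.snoc (emB11 hB11)).snoc (emA22 hA22)⟩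

lemma Builds.connectsVia {α : PBR X Y} {β : PBR Y Z} {b : Bool}
    {L : List (Bool × (X ⊕ Y ⊕ Z) × (X ⊕ Y ⊕ Z))} {a c : X ⊕ Z}
    (hL : Builds α β L (ι₀ a) (ι₀ c) b) : ConnectsVia α β L a c := by
  obtain ⟨hmem, hch, ⟨f, hf, hf1⟩, ⟨g, hg, hg1, hg2⟩⟩ := hL
  refine ⟨⟨?_, hmem, hch⟩, ?_, ?_⟩
  · intro hnil; rw [hnil] at hf; simp at hf
  · rw [hf]; simp [hf1]
  · rw [hg]; simp [hg2]

end Builders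

/-- The components of the PBR composition `β∘α` in terms of the components of
`α` and `β`, via usual composition of binary relations. -/
theorem pbr_comp_components (X Y Z : Type) [Fintype X] [Fintype Y] [Fintype Z]
    (α : PBR X Y) (β : PBR Y Z) :
    c12 (comp β α) =
      ⋃ i : ℕ, relComp (c12 β) (relComp (relPow (relComp (c22 α) (c11 β)) i) (c12 α)) ∧
    c21 (comp β α) =
      ⋃ i : ℕ, relComp (c21 α) (relComp (relPow (relComp (c11 β) (c22 α)) i) (c21 β)) ∧
    c11 (comp β α) = c11 α ∪
      ⋃ i : ℕ, relComp (c21 α)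
        (relComp (relPow (relComp (c11 β) (c22 α)) i) (relComp (c11 β) (c12 α))) ∧
    c22 (comp β α) = c22 β ∪
      ⋃ i : ℕ, relComp (c12 β)
        (relComp (relPow (relComp (c22 α) (c11 β)) i) (relComp (c22 α) (c21 β))) := by
  refine ⟨?_, ?_, ?_, ?_⟩
  · -- c12
    ext ⟨x, z⟩
    constructor
    · rintro ⟨L, ⟨⟨hne, hmem, hch⟩, hh, hl⟩⟩
      cases L with
      | nil => exact absurd rfl hne
      | cons e L' =>
        obtain ⟨b, s, t⟩ := e
        have hs : s = Sum.inl x := by simpa [ι₀] using hh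
        subst hs
        have hG := master α β L' (b, Sum.inl x, t) hmem hch (Sum.inr z) hl
        cases b with
        | false => exact hG
        | true => exact absurd hG (by simp [Goal])
    · intro h
      obtain ⟨i, hi⟩ := Set.mem_iUnion.1 h
      obtain ⟨w, hw, hB12⟩ := hi
      obtain ⟨L, hL⟩ := buildP i x w hw
      exact ⟨_, (hL.snoc (emB12 hB12)).connectsVia⟩
  · -- c21
    ext ⟨z, x⟩
    constructor
    · rintro ⟨L, ⟨⟨hne, hmem, hch⟩, hh, hl⟩⟩
      cases L with
      | nil => exact absurd rfl hne
      | cons e L' =>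
        obtain ⟨b, s, t⟩ := e
        have hs : s = Sum.inr (Sum.inr z) := by simpa [ι₀] using hh
        subst hs
        have hG := master α β L' (b, Sum.inr (Sum.inr z), t) hmem hch (Sum.inl x) hl
        cases b with
        | false => exact absurd hG (by simp [Goal])
        | true => exact hG
    · intro h
      obtain ⟨i, hi⟩ := Set.mem_iUnion.1 h
      obtain ⟨w, hw, hA21⟩ := hi
      obtain ⟨L, hL⟩ := buildQz i z w hw
      exact ⟨_, (hL.snoc (emA21 hA21)).connectsVia⟩
  · -- c11
    ext ⟨x, x'⟩
    constructor
    · rintro ⟨L, ⟨⟨hne, hmem, hch⟩, hh, hl⟩⟩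
      cases L with
      | nil => exact absurd rfl hne
      | cons e L' =>
        obtain ⟨b, s, t⟩ := e
        have hs : s = Sum.inl x := by simpa [ι₀] using hh
        subst hs
        have hG := master α β L' (b, Sum.inl x, t) hmem hch (Sum.inl x') hl
        cases b with
        | false => exact hG
        | true => exact absurd hG (by simp [Goal])
    · intro h
      rcases h with hm | h
      · exact ⟨_, (Builds.single (emA11 hm)).connectsVia⟩
      · obtain ⟨i, hi⟩ := Set.mem_iUnion.1 h
        obtain ⟨w, hw, hA21⟩ := hi
        obtain ⟨L, hL⟩ := buildQx i x w hw
        exact ⟨_, (hL.snoc (emA21 hA21)).connectsVia⟩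
  · -- c22
    ext ⟨z, z'⟩
    constructor
    · rintro ⟨L, ⟨⟨hne, hmem, hch⟩, hh, hl⟩⟩
      cases L with
      | nil => exact absurd rfl hne
      | cons e L' =>
        obtain ⟨b, s, t⟩ := e
        have hs : s = Sum.inr (Sum.inr z) := by simpa [ι₀] using hh
        subst hs
        have hG := master α β L' (b, Sum.inr (Sum.inr z), t) hmem hch (Sum.inr z') hl
        cases b with
        | false => exact absurd hG (by simp [Goal])
        | true => exact hG
    · intro h
      rcases h with hm | h
      · exact ⟨_, (Builds.single (emB22 hm)).connectsVia⟩
      · obtain ⟨i, hi⟩ := Set.mem_iUnion.1 h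
        obtain ⟨w, hw, hB12⟩ := hi
        obtain ⟨L, hL⟩ := buildPz i z w hw
        exact ⟨_, (hL.snoc (emB12 hB12)).connectsVia⟩

end PBRPaper
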